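/- Let C be a monoidal category whose unit 𝟙_C is an initial object, and suppose the identity functor of C admits a unital magma structure (μ, η). Then for all objects A, B, the endomorphism e_{A,B} := ((ρ_A).inv ⊗ (λ_B).inv) ≫ ((A ◁ η_B) ⊗ (η_A ▷ B)) ≫ μ_{A⊗B} : A ⊗ B ⟶ A ⊗ B is idempotent: e_{A,B} ≫ e_{A,B} = e_{A,B}. -/

import Mathlib

open CategoryTheory CategoryTheory.Limits CategoryTheory.MonoidalCategory

/-- A unital magma structure on the identity functor of a monoidal category: natural
families `μ_A : A ⊗ A ⟶ A` and `η_A : 𝟙_C ⟶ A` satisfying the two unit laws. -/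
structure IdMagma (C : Type*) [Category C] [MonoidalCategory C] where
  μ : ∀ A : C, A ⊗ A ⟶ A
  η : ∀ A : C, 𝟙_ C ⟶ A
  μ_natural : ∀ {A B : C} (f : A ⟶ B), (f ⊗ₘ f) ≫ μ B = μ A ≫ f
  η_natural : ∀ {A B : C} (f : A ⟶ B), η A ≫ f = η B
  left_unit : ∀ A : C, (λ_ A).inv ≫ (η A ▷ A) ≫ μ A = 𝟙 A
  right_unit : ∀ A : C, (ρ_ A).inv ≫ (A ◁ η A) ≫ μ A = 𝟙 A

/-- In a monoidal category with initial unit whose identity functor carries a unital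
magma structure, the canonical endomorphism of `A ⊗ B` is idempotent. -/
theorem canonical_endo_idempotent {C : Type*} [Category C] [MonoidalCategory C]
    (hI : IsInitial (𝟙_ C)) (m : IdMagma C) (A B : C) :
    (((ρ_ A).inv ⊗ₘ (λ_ B).inv) ≫ ((A ◁ m.η B) ⊗ₘ (m.η A ▷ B)) ≫ m.μ (A ⊗ B)) ≫
      (((ρ_ A).inv ⊗ₘ (λ_ B).inv) ≫ ((A ◁ m.η B) ⊗ₘ (m.η A ▷ B)) ≫ m.μ (A ⊗ B)) =
    ((ρ_ A).inv ⊗ₘ (λ_ B).inv) ≫ ((A ◁ m.η B) ⊗ₘ (m.η A ▷ B)) ≫ m.μ (A ⊗ B) := by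
  have hext : ∀ (X : C) (u v : 𝟙_ C ⟶ X), u = v := fun X u v => hI.hom_ext u v
  set f : A ⟶ A ⊗ B := (ρ_ A).inv ≫ (A ◁ m.η B) with hfdef
  set g : B ⟶ A ⊗ B := (λ_ B).inv ≫ (m.η A ▷ B) with hgdef
  set e : A ⊗ B ⟶ A ⊗ B := (f ⊗ₘ g) ≫ m.μ (A ⊗ B) with hedef
  have he : ((ρ_ A).inv ⊗ₘ (λ_ B).inv) ≫ ((A ◁ m.η B) ⊗ₘ (m.η A ▷ B)) ≫ m.μ (A ⊗ B) = e := by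
    rw [hedef, hfdef, hgdef, ← Category.assoc, tensorHom_comp_tensorHom]
  rw [he]
  have hf : f ≫ e = f := by
    have h1 : m.η B ≫ g = m.η (A ⊗ B) := hext _ _ _
    calc f ≫ e
        = (ρ_ A).inv ≫ ((𝟙 A ⊗ₘ m.η B) ≫ (f ⊗ₘ g)) ≫ m.μ (A ⊗ B) := by
          simp [hedef, hfdef, id_tensorHom]
      _ = (ρ_ A).inv ≫ (f ⊗ₘ (m.η B ≫ g)) ≫ m.μ (A ⊗ B) := by
          rw [tensorHom_comp_tensorHom, Category.id_comp]
      _ = (ρ_ A).inv ≫ (f ⊗ₘ m.η (A ⊗ B)) ≫ m.μ (A ⊗ B) := by rw [h1]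
      _ = (ρ_ A).inv ≫ ((f ▷ 𝟙_ C) ≫ ((A ⊗ B) ◁ m.η (A ⊗ B))) ≫ m.μ (A ⊗ B) := by
          rw [MonoidalCategory.tensorHom_def]
      _ = f ≫ (ρ_ (A ⊗ B)).inv ≫ ((A ⊗ B) ◁ m.η (A ⊗ B)) ≫ m.μ (A ⊗ B) := by
          simp only [Category.assoc]
          rw [← rightUnitor_inv_naturality_assoc]
      _ = f := by rw [m.right_unit]; simp
  have hg : g ≫ e = g := by
    have h1 : m.η A ≫ f = m.η (A ⊗ B) := hext _ _ _
    calc g ≫ e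
        = (λ_ B).inv ≫ ((m.η A ⊗ₘ 𝟙 B) ≫ (f ⊗ₘ g)) ≫ m.μ (A ⊗ B) := by
          simp [hedef, hgdef, tensorHom_id]
      _ = (λ_ B).inv ≫ ((m.η A ≫ f) ⊗ₘ g) ≫ m.μ (A ⊗ B) := by
          rw [tensorHom_comp_tensorHom, Category.id_comp]
      _ = (λ_ B).inv ≫ (m.η (A ⊗ B) ⊗ₘ g) ≫ m.μ (A ⊗ B) := by rw [h1]
      _ = (λ_ B).inv ≫ ((𝟙_ C ◁ g) ≫ (m.η (A ⊗ B) ▷ (A ⊗ B))) ≫ m.μ (A ⊗ B) := by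
          rw [tensorHom_def']
      _ = g ≫ (λ_ (A ⊗ B)).inv ≫ (m.η (A ⊗ B) ▷ (A ⊗ B)) ≫ m.μ (A ⊗ B) := by
          simp only [Category.assoc]
          rw [← leftUnitor_inv_naturality_assoc]
      _ = g := by rw [m.left_unit]; simp
  conv_lhs => rw [hedef, Category.assoc, ← m.μ_natural e, ← Category.assoc,
    tensorHom_comp_tensorHom, hf, hg]
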